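/- Let h : ℝ → ℂ be a smooth compactly supported function. For every B > 0 there is a constant C > 0 such that for all real K ≥ 1, |Σ_{j ∈ ℤ} h((2j − 1)/K) − (K/2)·∫_ℝ h(t) dt| ≤ C·K^{−B}. Equivalently, summing over even integers k: Σ_{k ∈ 2ℤ} h((k−1)/K) = (K/2)·ĥ(0) + O_B(K^{−B}), where ĥ(0) = ∫_ℝ h(t) dt. -/

import Mathlib

open MeasureTheory

open MeasureTheory Filter Complex
open scoped FourierTransform Real

lemma integral_comp_affine' (v : ℝ → ℂ) {a : ℝ} (ha : a ≠ 0) (b : ℝ) :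
    ∫ x : ℝ, v (a * x + b) = |a|⁻¹ • ∫ y : ℝ, v y := by
  calc ∫ x : ℝ, v (a * x + b) = ∫ x : ℝ, v (a * (x + b / a)) := by
        congr 1; ext x; rw [mul_add, mul_div_cancel₀ _ ha]
    _ = ∫ x : ℝ, v (a * x) :=
        integral_add_right_eq_self (fun x => v (a * x)) (b / a)
    _ = |a|⁻¹ • ∫ y, v y := by
        rw [MeasureTheory.Measure.integral_comp_mul_left, abs_inv]

lemma fourier_affine (h : ℝ → ℂ) {K : ℝ} (hK : 0 < K) (ξ : ℝ) :
    𝓕 (fun x : ℝ => h ((2 * x - 1) / K)) ξ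
      = (K / 2 : ℝ) • (Complex.exp (↑(-π * ξ) * Complex.I) * 𝓕 h (K * ξ / 2)) := by
  rw [Real.fourier_real_eq_integral_exp_smul]
  set V : ℝ → ℂ := fun t => Complex.exp (↑(-2 * π * ((K * t + 1) / 2) * ξ) * Complex.I) • h t
    with hV
  have e1 : (∫ x : ℝ, Complex.exp (↑(-2 * π * x * ξ) * Complex.I) • h ((2 * x - 1) / K))
      = ∫ x : ℝ, V (2 / K * x + -1 / K) := by
    congr 1 with x
    have h1 : (2 / K) * x + (-1 / K) = (2 * x - 1) / K := by field_simp; ring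
    have h2 : (K * ((2 * x - 1) / K) + 1) / 2 = x := by field_simp; ring
    simp only [hV, h1, h2]
  rw [e1, integral_comp_affine' V (by positivity) (-1 / K)]
  have habs : |2 / K|⁻¹ = K / 2 := by
    rw [abs_of_pos (by positivity)]; field_simp
  rw [habs]
  congr 1
  rw [Real.fourier_real_eq_integral_exp_smul, ← smul_eq_mul, ← integral_smul]
  congr 1 with t
  simp only [hV, smul_eq_mul, ← Complex.exp_add, ← mul_assoc]
  congr 2
  push_cast
  ring

lemma fourier_decay (h : ℝ → ℂ) (hsm : ContDiff ℝ (⊤ : ℕ∞) h)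
    (hsupp : HasCompactSupport h) (n : ℕ) :
    ∃ C : ℝ, 0 ≤ C ∧ ∀ ξ : ℝ, (π * |ξ|) ^ n * ‖𝓕 h ξ‖ ≤ C := by
  have hds : ∀ m : ℕ, HasCompactSupport (iteratedDeriv m h) := by
    intro m
    have : iteratedDeriv m h = (fun L : (ℝ [×m]→L[ℝ] ℂ) => L fun _ => 1) ∘ iteratedFDeriv ℝ m h := by
      ext x; simp [iteratedDeriv]
    rw [this]
    exact (hsupp.iteratedFDeriv m).comp_left (by simp)
  have hint : ∀ m : ℕ, (m : ℕ∞) ≤ (⊤ : ℕ∞) → Integrable (iteratedDeriv m h) := fun m _ =>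
    (hsm.continuous_iteratedDeriv m (by exact_mod_cast le_top)).integrable_of_hasCompactSupport
      (hds m)
  have key := Real.fourier_iteratedDeriv (N := (⊤ : ℕ∞)) hsm hint (le_top (a := (n : ℕ∞)))
  refine ⟨∫ x : ℝ, ‖iteratedDeriv n h x‖, integral_nonneg fun x => norm_nonneg _, fun ξ => ?_⟩
  have h1 : ‖𝓕 (iteratedDeriv n h) ξ‖ ≤ ∫ x : ℝ, ‖iteratedDeriv n h x‖ :=
    VectorFourier.norm_fourierIntegral_le_integral_norm _ _ _ _ _
  rw [key] at h1
  have h2 : ‖(2 * ↑π * I * ↑ξ) ^ n • 𝓕 h ξ‖ = (2 * π * |ξ|) ^ n * ‖𝓕 h ξ‖ := by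
    rw [norm_smul, norm_pow]
    congr 2
    have : ‖(2 * ↑π * I * (ξ:ℂ))‖ = 2 * π * |ξ| := by
      simp only [norm_mul, Complex.norm_I, Complex.norm_real, Complex.norm_ofNat,
        Real.norm_eq_abs, mul_one]
      rw [_root_.abs_of_nonneg Real.pi_pos.le]
    exact this
  rw [h2] at h1
  refine le_trans ?_ h1
  have hb : (π * |ξ|) ^ n ≤ (2 * π * |ξ|) ^ n := by
    apply pow_le_pow_left₀ (by positivity)
    nlinarith [abs_nonneg ξ, Real.pi_pos]
  exact mul_le_mul_of_nonneg_right hb (norm_nonneg _)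


/-- Poisson-summation estimate: for smooth compactly supported `h`,
`∑_{j ∈ ℤ} h((2j−1)/K) = (K/2) ∫ h + O_B(K^{−B})` for every `B > 0`. -/
theorem poisson_sum_half_integral_weights (h : ℝ → ℂ) (hsm : ContDiff ℝ (⊤ : ℕ∞) h)
    (hsupp : HasCompactSupport h) :
    ∀ B : ℝ, 0 < B → ∃ C : ℝ, 0 < C ∧ ∀ K : ℝ, 1 ≤ K →
      ‖(∑' j : ℤ, h ((2 * (j : ℝ) - 1) / K)) - (K / 2) * ∫ t : ℝ, h t‖ ≤ C * K ^ (-B) := by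
  intro B hB
  set n : ℕ := ⌈B⌉₊ + 2 with hn
  set b : ℝ := (n : ℝ) with hb
  have hn1 : (1 : ℝ) < b := by
    rw [hb, hn]; push_cast; nlinarith [Nat.cast_nonneg (α := ℝ) ⌈B⌉₊]
  have hBn : B + 1 ≤ b := by
    have h1 : B ≤ (⌈B⌉₊ : ℝ) := Nat.le_ceil B
    rw [hb, hn]; push_cast; linarith
  obtain ⟨C₀, hC₀, hdecay⟩ := fourier_decay h hsm hsupp n
  have hSsum : Summable (fun m : ℤ => |(m : ℝ)| ^ (-b)) := Real.summable_abs_int_rpow hn1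
  set S := ∑' m : ℤ, |(m : ℝ)| ^ (-b) with hSdef
  have hS0 : (0 : ℝ) ≤ S := tsum_nonneg fun m => Real.rpow_nonneg (abs_nonneg _) _
  refine ⟨C₀ * S / 2 + 1, by positivity, fun K hK => ?_⟩
  have hK0 : (0 : ℝ) < K := lt_of_lt_of_le one_pos hK
  set g : ℝ → ℂ := fun x => h ((2 * x - 1) / K) with hgdef
  have hgcont : Continuous g := hsm.continuous.comp (by fun_prop)
  have hgsupp : HasCompactSupport g := by
    have h2K : (2 / K : ℝ) ≠ 0 := by positivity
    have hcomp := hsupp.comp_homeomorph (affineHomeomorph (2 / K) (-1 / K) h2K)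
    have heq : g = h ∘ (affineHomeomorph (2 / K) (-1 / K) h2K) := by
      funext x
      simp only [hgdef, Function.comp_apply, affineHomeomorph_apply]
      congr 1
      field_simp; ring
    rwa [heq]
  have hFnorm : ∀ ξ : ℝ, ‖𝓕 g ξ‖ = K / 2 * ‖𝓕 h (K * ξ / 2)‖ := by
    intro ξ
    rw [hgdef, fourier_affine h hK0 ξ, norm_smul, norm_mul, Complex.norm_exp_ofReal_mul_I,
      one_mul, Real.norm_eq_abs, abs_of_pos (by positivity)]
  set D : ℝ := K / 2 * (C₀ * K ^ (-b)) with hD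
  have hD0 : 0 ≤ D := by positivity
  have hbound : ∀ m : ℤ, ‖(if m = 0 then 0 else 𝓕 g m)‖ ≤ D * |(m : ℝ)| ^ (-b) := by
    intro m
    by_cases hm : m = 0
    · simp [hm, Real.zero_rpow (by linarith : -b ≠ 0)]
    · rw [if_neg hm, hFnorm]
      have hm1 : (1 : ℝ) ≤ |(m : ℝ)| := by
        rw [← Int.cast_abs]; exact_mod_cast Int.one_le_abs (by simpa using hm)
      have hKm : (0 : ℝ) < K * |(m : ℝ)| := by positivity
      have hd := hdecay (K * m / 2)
      have hc : (K * |(m : ℝ)|) ^ n ≤ (π * |K * (m : ℝ) / 2|) ^ n := by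
        apply pow_le_pow_left₀ (by positivity)
        rw [abs_div, abs_mul, abs_of_pos hK0]
        rw [show |(2 : ℝ)| = 2 by norm_num]
        nlinarith [Real.pi_gt_three, abs_nonneg (m : ℝ), hK0.le]
      have h1 : (K * |(m : ℝ)|) ^ n * ‖𝓕 h (K * m / 2)‖ ≤ C₀ :=
        le_trans (mul_le_mul_of_nonneg_right hc (norm_nonneg _)) hd
      have h2 : ‖𝓕 h (K * m / 2)‖ ≤ C₀ * (K * |(m : ℝ)|) ^ (-b) := by
        have hpow : (0 : ℝ) < (K * |(m : ℝ)|) ^ n := by positivity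
        rw [Real.rpow_neg hKm.le, hb, Real.rpow_natCast, mul_comm C₀, inv_mul_eq_div,
          le_div_iff₀ hpow]
        linarith [h1]
      calc K / 2 * ‖𝓕 h (K * ↑m / 2)‖ ≤ K / 2 * (C₀ * (K * |(m : ℝ)|) ^ (-b)) :=
            mul_le_mul_of_nonneg_left h2 (by positivity)
        _ = D * |(m : ℝ)| ^ (-b) := by
            rw [hD, Real.mul_rpow hK0.le (abs_nonneg _)]; ring
  have hnormsum : Summable fun m : ℤ => ‖(if m = 0 then 0 else 𝓕 g m)‖ :=
    (hSsum.mul_left D).of_nonneg_of_le (fun m => norm_nonneg _) hbound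
  have s1 : Summable fun m : ℤ => (if m = 0 then 0 else 𝓕 g m) := hnormsum.of_norm
  have hgsum : Summable fun m : ℤ => 𝓕 g m := by
    have s2 : Summable fun m : ℤ => (if m = 0 then 𝓕 g 0 else 0) := by
      apply summable_of_ne_finset_zero (s := {0})
      intro m hm
      simp only [Finset.mem_singleton] at hm
      simp [hm]
    have hsplit : (fun m : ℤ => 𝓕 g m)
        = fun m : ℤ => (if m = 0 then 𝓕 g 0 else 0) + (if m = 0 then 0 else 𝓕 g m) := by
      funext m; by_cases hm : m = 0 <;> simp [hm]
    rw [hsplit]; exact s2.add s1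
  have hO : g =O[cocompact ℝ] fun x : ℝ => |x| ^ (-(2 : ℝ)) := by
    have hz : g =ᶠ[cocompact ℝ] (fun _ => (0 : ℂ)) := by
      filter_upwards [hgsupp.compl_mem_cocompact] with x hx
      exact image_eq_zero_of_notMem_tsupport hx
    exact hz.trans_isBigO (Asymptotics.isBigO_zero _ _)
  have hP := Real.tsum_eq_tsum_fourier_of_rpow_decay_of_summable hgcont one_lt_two hO
    hgsum 0
  have hP' : (∑' m : ℤ, g (0 + m)) = ∑' m : ℤ, 𝓕 g m := by
    rw [hP]
    congr 1 with m
    rw [show ((0 : ℝ) : UnitAddCircle) = 0 by norm_cast, fourier_eval_zero, mul_one]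
  have hsum_eq : (∑' j : ℤ, h ((2 * (j : ℝ) - 1) / K)) = ∑' m : ℤ, 𝓕 g m := by
    rw [← hP']
    congr 1 with j
    simp [hgdef]
  have hF0 : 𝓕 g 0 = (K / 2 : ℂ) * ∫ t : ℝ, h t := by
    rw [hgdef, fourier_affine h hK0 0]
    have : 𝓕 h (K * 0 / 2) = ∫ t : ℝ, h t := by
      rw [Real.fourier_real_eq_integral_exp_smul]
      simp
    rw [this]
    push_cast
    simp [Complex.real_smul]
  have hdiff : (∑' m : ℤ, 𝓕 g m) - (K / 2 : ℂ) * ∫ t : ℝ, h t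
      = ∑' m : ℤ, (if m = 0 then 0 else 𝓕 g m) := by
    rw [Summable.tsum_eq_add_tsum_ite hgsum 0, Int.cast_zero, hF0]; ring
  rw [hsum_eq]
  have hcast : ((K : ℂ) / 2) = ((K / 2 : ℝ) : ℂ) := by push_cast; ring
  calc ‖(∑' m : ℤ, 𝓕 g m) - (K / 2 : ℂ) * ∫ t : ℝ, h t‖
      = ‖∑' m : ℤ, (if m = 0 then 0 else 𝓕 g m)‖ := by rw [hdiff]
    _ ≤ ∑' m : ℤ, ‖(if m = 0 then 0 else 𝓕 g m)‖ := norm_tsum_le_tsum_norm hnormsum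
    _ ≤ ∑' m : ℤ, D * |(m : ℝ)| ^ (-b) := Summable.tsum_le_tsum hbound hnormsum (hSsum.mul_left D)
    _ = D * S := tsum_mul_left
    _ ≤ (C₀ * S / 2 + 1) * K ^ (-B) := by
        have hKb : K * K ^ (-b) = K ^ (1 - b) := by
          rw [sub_eq_add_neg, Real.rpow_add hK0, Real.rpow_one]
        have hmono : K ^ (1 - b) ≤ K ^ (-B) :=
          Real.rpow_le_rpow_of_exponent_le hK (by linarith)
        have hKB : (0 : ℝ) ≤ K ^ (-B) := Real.rpow_nonneg hK0.le _
        have : D * S = C₀ * S / 2 * (K * K ^ (-b)) := by rw [hD]; ring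
        rw [this, hKb]
        calc C₀ * S / 2 * K ^ (1 - b) ≤ C₀ * S / 2 * K ^ (-B) := by
              apply mul_le_mul_of_nonneg_left hmono (by positivity)
          _ ≤ (C₀ * S / 2 + 1) * K ^ (-B) := by nlinarith
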